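/- Let Φ : ℝ → ℝ be twice continuously differentiable and monotone nondecreasing, let κ > 0, T > 0, and let K₁ ≤ K₂ be real constants. Suppose ρ : [0,T] × 𝕋 → ℝ is continuous, the map x ↦ Φ(ρ(t,x)) is twice continuously differentiable in x for t > 0, t ↦ ρ(t,x) is differentiable for t > 0, the partial derivatives are jointly continuous on (0,T] × 𝕋, and ρ solves ∂_t ρ(t,x) = κ · ∂²_x (Φ(ρ(t,·)))(x) for all (t,x) ∈ (0,T] × 𝕋. If K₁ ≤ ρ(0,x) ≤ K₂ for all x ∈ 𝕋, then K₁ ≤ ρ(t,x) ≤ K₂ for all (t,x) ∈ [0,T] × 𝕋 (maximum principle for the quasilinear heat equation ∂_t ρ = κ ∂²_x Φ(ρ)). -/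

import Mathlib

open Set Filter Topology

/-- Second derivative at a global max of a C² function is nonpositive. -/
lemma aux_secondDeriv_nonpos (g : ℝ → ℝ) (hg : ContDiff ℝ 2 g) (x₀ : ℝ)
    (hmax : ∀ x, g x ≤ g x₀) : deriv (deriv g) x₀ ≤ 0 := by
  by_contra h
  push_neg at h
  have h2 : (2 : WithTop ℕ∞) = 1 + 1 := by norm_num
  have hg1 : ContDiff ℝ 1 (deriv g) := by
    have := (contDiff_succ_iff_deriv.mp (h2 ▸ hg)).2.2
    exact this
  have hdg : Differentiable ℝ g := (contDiff_succ_iff_deriv.mp (h2 ▸ hg)).1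
  have hcdd : Continuous (deriv (deriv g)) := by
    have h1 : (1 : WithTop ℕ∞) = 0 + 1 := by norm_num
    exact (contDiff_succ_iff_deriv.mp (h1 ▸ hg1)).2.2.continuous
  -- deriv g x₀ = 0
  have hloc : IsLocalMax g x₀ := Filter.Eventually.of_forall hmax
  have hd0 : deriv g x₀ = 0 := hloc.deriv_eq_zero
  -- positivity of second derivative near x₀
  obtain ⟨δ, hδ, hball⟩ : ∃ δ > 0, ∀ y, dist y x₀ < δ → 0 < deriv (deriv g) y := by
    have : {y : ℝ | 0 < deriv (deriv g) y} ∈ 𝓝 x₀ :=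
      (isOpen_lt continuous_const hcdd).mem_nhds h
    rcases Metric.mem_nhds_iff.mp this with ⟨δ, hδ, hsub⟩
    exact ⟨δ, hδ, fun y hy => hsub hy⟩
  set b := x₀ + δ / 2 with hb
  have hx₀b : x₀ < b := by simp [hb]; linarith
  have hsm : StrictMonoOn (deriv g) (Icc x₀ b) := by
    apply strictMonoOn_of_deriv_pos (convex_Icc _ _) hg1.continuous.continuousOn
    intro y hy
    rw [interior_Icc] at hy
    apply hball
    have hy1 : x₀ < y := hy.1
    have hy2 : y < x₀ + δ / 2 := hb ▸ hy.2
    rw [Real.dist_eq, abs_of_nonneg (by linarith)]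
    linarith
  have hderivpos : ∀ y ∈ Ioo x₀ b, 0 < deriv g y := by
    intro y hy
    have := hsm (left_mem_Icc.mpr hx₀b.le) ⟨hy.1.le, hy.2.le⟩ hy.1
    rwa [hd0] at this
  have hgsm : StrictMonoOn g (Icc x₀ b) := by
    apply strictMonoOn_of_deriv_pos (convex_Icc _ _) hdg.continuous.continuousOn
    intro y hy
    rw [interior_Icc] at hy
    exact hderivpos y hy
  have := hgsm (left_mem_Icc.mpr hx₀b.le) (right_mem_Icc.mpr hx₀b.le) hx₀b
  exact absurd (hmax b) (not_le.mpr this)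

/-- If `f` is differentiable at `t₀ ∈ (0, T]` and `t₀` maximizes `f` over `[0, T]`,
then `deriv f t₀ ≥ 0`. -/
lemma aux_deriv_nonneg (f : ℝ → ℝ) (T t₀ : ℝ) (ht₀ : t₀ ∈ Set.Ioc 0 T)
    (hdiff : DifferentiableAt ℝ f t₀) (hmax : ∀ s ∈ Set.Icc 0 T, f s ≤ f t₀) :
    0 ≤ deriv f t₀ := by
  have hd := hdiff.hasDerivAt
  rw [hasDerivAt_iff_tendsto_slope] at hd
  have hd' : Tendsto (slope f t₀) (𝓝[<] t₀) (𝓝 (deriv f t₀)) :=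
    hd.mono_left (nhdsWithin_mono _ fun y hy => by
      simp only [mem_compl_iff, mem_singleton_iff]
      exact ne_of_lt hy)
  apply ge_of_tendsto hd'
  filter_upwards [Ioo_mem_nhdsLT_of_mem (by constructor <;> simp [ht₀.1] : t₀ ∈ Ioc (0:ℝ) t₀)]
    with s hs
  have hfs : f s ≤ f t₀ := hmax s ⟨hs.1.le, hs.2.le.trans ht₀.2⟩
  rw [slope_def_field]
  have h1 : f s - f t₀ ≤ 0 := by linarith
  have h2 : s - t₀ ≤ 0 := by linarith [hs.2]
  exact div_nonneg_iff.mpr (Or.inr ⟨h1, h2⟩)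

/-- Upper bound half of the maximum principle. -/
lemma aux_upper (Φ : ℝ → ℝ) (hΦmono : Monotone Φ)
    (κ T K₂ : ℝ) (hκ : 0 < κ) (hT : 0 < T)
    (ρ : ℝ → ℝ → ℝ)
    (hper : ∀ t x : ℝ, ρ t (x + 1) = ρ t x)
    (hcont : ContinuousOn (fun p : ℝ × ℝ => ρ p.1 p.2)
      (Set.Icc 0 T ×ˢ (Set.univ : Set ℝ)))
    (hx : ∀ t ∈ Set.Ioc (0 : ℝ) T, ContDiff ℝ 2 (fun x => Φ (ρ t x)))
    (ht : ∀ x : ℝ, ∀ t ∈ Set.Ioc (0 : ℝ) T, DifferentiableAt ℝ (fun s => ρ s x) t)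
    (hpde : ∀ t ∈ Set.Ioc (0 : ℝ) T, ∀ x : ℝ,
      deriv (fun s => ρ s x) t = κ * deriv (deriv (fun y => Φ (ρ t y))) x)
    (hinit : ∀ x : ℝ, ρ 0 x ≤ K₂) :
    ∀ t ∈ Set.Icc (0 : ℝ) T, ∀ x : ℝ, ρ t x ≤ K₂ := by
  have hperi : ∀ t : ℝ, Function.Periodic (ρ t) 1 := fun t x => hper t x
  have hfract : ∀ t x : ℝ, ρ t (Int.fract x) = ρ t x := by
    intro t x
    have h1 := (hperi t).sub_int_mul_eq (x := x) ⌊x⌋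
    rw [mul_one, Int.self_sub_floor] at h1
    exact h1
  -- the key estimate with a slope `ε`
  have key : ∀ ε > (0:ℝ), ∀ t ∈ Set.Icc (0:ℝ) T, ∀ x : ℝ, ρ t x - ε * t ≤ K₂ := by
    intro ε hε
    set u : ℝ × ℝ → ℝ := fun p => ρ p.1 p.2 - ε * p.1 with hu
    have hKcpt : IsCompact (Set.Icc (0:ℝ) T ×ˢ Set.Icc (0:ℝ) 1) :=
      isCompact_Icc.prod isCompact_Icc
    have hKne : (Set.Icc (0:ℝ) T ×ˢ Set.Icc (0:ℝ) 1).Nonempty :=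
      ⟨(0, 0), by constructor <;> constructor <;> norm_num [hT.le]⟩
    have hucont : ContinuousOn u (Set.Icc (0:ℝ) T ×ˢ Set.Icc (0:ℝ) 1) := by
      apply ContinuousOn.sub
      · exact hcont.mono (Set.prod_mono le_rfl (Set.subset_univ _))
      · exact (continuous_const.mul continuous_fst).continuousOn
    obtain ⟨p₀, hp₀K, hp₀max⟩ := hKcpt.exists_isMaxOn hKne hucont
    obtain ⟨ht₀, hx₀⟩ := hp₀K
    -- the maximum value is at most K₂
    have hMle : u p₀ ≤ K₂ := by
      by_contra hM
      push_neg at hM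
      -- t₀ > 0
      have ht₀pos : 0 < p₀.1 := by
        rcases eq_or_lt_of_le ht₀.1 with h0 | h0
        · exfalso
          have heq : u p₀ = ρ 0 p₀.2 := by
            have h0' : p₀.1 = 0 := h0.symm
            simp [hu, h0']
          rw [heq] at hM
          exact absurd (hinit p₀.2) (not_le.mpr hM)
        · exact h0
      have ht₀Ioc : p₀.1 ∈ Set.Ioc (0:ℝ) T := ⟨ht₀pos, ht₀.2⟩
      -- spatial maximum over all of ℝ
      have hxmax : ∀ y : ℝ, ρ p₀.1 y ≤ ρ p₀.1 p₀.2 := by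
        intro y
        have hmem : (p₀.1, Int.fract y) ∈ Set.Icc (0:ℝ) T ×ˢ Set.Icc (0:ℝ) 1 :=
          ⟨ht₀, ⟨Int.fract_nonneg y, (Int.fract_lt_one y).le⟩⟩
        have := hp₀max hmem
        simp only [hu, Set.mem_setOf_eq] at this
        have h2 : ρ p₀.1 (Int.fract y) ≤ ρ p₀.1 p₀.2 := by linarith
        rwa [hfract] at h2
      -- temporal maximum
      have htmax : ∀ s ∈ Set.Icc (0:ℝ) T, ρ s p₀.2 - ε * s ≤ ρ p₀.1 p₀.2 - ε * p₀.1 := by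
        intro s hs
        have hmem : (s, p₀.2) ∈ Set.Icc (0:ℝ) T ×ˢ Set.Icc (0:ℝ) 1 := ⟨hs, hx₀⟩
        exact hp₀max hmem
      -- derivative in time is at least ε
      have hdiff : DifferentiableAt ℝ (fun s => ρ s p₀.2) p₀.1 := ht p₀.2 p₀.1 ht₀Ioc
      have hlin : DifferentiableAt ℝ (fun s : ℝ => ε * s) p₀.1 := by fun_prop
      have hdiff2 : DifferentiableAt ℝ (fun s => ρ s p₀.2 - ε * s) p₀.1 :=
        hdiff.sub hlin
      have hd0 : 0 ≤ deriv (fun s => ρ s p₀.2 - ε * s) p₀.1 :=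
        aux_deriv_nonneg _ T p₀.1 ht₀Ioc hdiff2 htmax
      have hderiv_eq : deriv (fun s => ρ s p₀.2 - ε * s) p₀.1
          = deriv (fun s => ρ s p₀.2) p₀.1 - ε := by
        rw [deriv_fun_sub hdiff hlin, deriv_const_mul_field]
        simp
      have hge : ε ≤ deriv (fun s => ρ s p₀.2) p₀.1 := by
        rw [hderiv_eq] at hd0; linarith
      -- second derivative in space is nonpositive
      have hdd : deriv (deriv (fun y => Φ (ρ p₀.1 y))) p₀.2 ≤ 0 := by
        apply aux_secondDeriv_nonpos _ (hx p₀.1 ht₀Ioc)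
        intro y
        exact hΦmono (hxmax y)
      have := hpde p₀.1 ht₀Ioc p₀.2
      nlinarith [mul_nonpos_of_nonneg_of_nonpos hκ.le hdd]
    -- conclude for arbitrary (t, x)
    intro t htT x
    have hmem : (t, Int.fract x) ∈ Set.Icc (0:ℝ) T ×ˢ Set.Icc (0:ℝ) 1 :=
      ⟨htT, ⟨Int.fract_nonneg x, (Int.fract_lt_one x).le⟩⟩
    have := hp₀max hmem
    simp only [hu, Set.mem_setOf_eq] at this
    have h2 : ρ t (Int.fract x) - ε * t ≤ K₂ := le_trans this hMle
    rwa [hfract] at h2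
  -- let ε → 0
  intro t htT x
  apply le_of_forall_pos_le_add
  intro ε hε
  have hεT : 0 < ε / (T + 1) := by positivity
  have h1 := key (ε / (T + 1)) hεT t htT x
  have h2 : ε / (T + 1) * t ≤ ε / (T + 1) * (T + 1) :=
    mul_le_mul_of_nonneg_left (by linarith [htT.2]) hεT.le
  rw [div_mul_cancel₀] at h2
  · linarith
  · linarith

/-- Maximum principle for the quasilinear heat equation `∂_t ρ = κ ∂²_x Φ(ρ)` on
the torus `𝕋 = ℝ/ℤ` (encoded as 1-periodic functions on `ℝ`): if the initial
condition takes values in `[K₁, K₂]`, so does the solution for all times in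
`[0, T]`. -/
theorem stmt12 (Φ : ℝ → ℝ) (hΦ : ContDiff ℝ 2 Φ) (hΦmono : Monotone Φ)
    (κ T K₁ K₂ : ℝ) (hκ : 0 < κ) (hT : 0 < T) (hK : K₁ ≤ K₂)
    (ρ : ℝ → ℝ → ℝ)
    (hper : ∀ t x : ℝ, ρ t (x + 1) = ρ t x)
    (hcont : ContinuousOn (fun p : ℝ × ℝ => ρ p.1 p.2)
      (Set.Icc 0 T ×ˢ (Set.univ : Set ℝ)))
    (hx : ∀ t ∈ Set.Ioc (0 : ℝ) T, ContDiff ℝ 2 (fun x => Φ (ρ t x)))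
    (ht : ∀ x : ℝ, ∀ t ∈ Set.Ioc (0 : ℝ) T, DifferentiableAt ℝ (fun s => ρ s x) t)
    (hcont2 : ContinuousOn
      (fun p : ℝ × ℝ => deriv (deriv (fun y => Φ (ρ p.1 y))) p.2)
      (Set.Ioc 0 T ×ˢ (Set.univ : Set ℝ)))
    (hcont3 : ContinuousOn (fun p : ℝ × ℝ => deriv (fun s => ρ s p.2) p.1)
      (Set.Ioc 0 T ×ˢ (Set.univ : Set ℝ)))
    (hpde : ∀ t ∈ Set.Ioc (0 : ℝ) T, ∀ x : ℝ,
      deriv (fun s => ρ s x) t = κ * deriv (deriv (fun y => Φ (ρ t y))) x)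
    (hinit : ∀ x : ℝ, K₁ ≤ ρ 0 x ∧ ρ 0 x ≤ K₂) :
    ∀ t ∈ Set.Icc (0 : ℝ) T, ∀ x : ℝ, K₁ ≤ ρ t x ∧ ρ t x ≤ K₂ := by
  intro t htT x
  refine ⟨?_, ?_⟩
  · -- lower bound, via the upper bound applied to `-ρ` with `Φ'(y) = -Φ(-y)`
    have hres := aux_upper (fun y => -Φ (-y))
      (fun a b hab => neg_le_neg (hΦmono (neg_le_neg hab)))
      κ T (-K₁) hκ hT (fun s z => -ρ s z)
      (fun s z => by show -ρ s (z + 1) = -ρ s z; rw [hper])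
      hcont.neg
      (fun τ hτ => by simp only [neg_neg]; exact (hx τ hτ).neg)
      (fun z τ hτ => (ht z τ hτ).neg)
      (fun τ hτ z => by
        have h1 : deriv (fun s => -ρ s z) τ = -deriv (fun s => ρ s z) τ := deriv.neg
        simp only [neg_neg]
        rw [h1,
          show (deriv fun y => -Φ (ρ τ y)) = fun w => -deriv (fun y => Φ (ρ τ y)) w from
            deriv.neg',
          deriv.fun_neg, hpde τ hτ z]
        ring)
      (fun z => neg_le_neg (hinit z).1)
      t htT x
    linarith
  · exact aux_upper Φ hΦmono κ T K₂ hκ hT ρ hper hcont hx ht hpde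
      (fun z => (hinit z).2) t htT x
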